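/- Let p = (p_i)_{i∈ℕ} be a probability distribution on ℕ, X^n a sample of n ≥ 81 i.i.d. observations from p, and p̂ the maximum likelihood estimator. For δ ∈ (0,1), define a = (4/(3n))·log(2(n+1)/δ) + log(n)/n and b = 2√( log(n+1)/n + (1/n)·log(2/δ) ), and let v̂* = sup_{i∈ℕ} p̂_i(1−p̂_i). Then with probability at least 1 − δ − 81/n, sup_{i∈ℕ} |p_i − p̂_i| ≤ a + (3/2)b² + b√a + (3/2)·b·√(v̂*). -/

import Mathlib

open MeasureTheory Real Filter

noncomputable def sampleMeasure (p : PMF ℕ) (n : ℕ) : Measure (Fin n → ℕ) :=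
  MeasureTheory.Measure.pi fun _ => p.toMeasure

noncomputable def mle (n : ℕ) (x : Fin n → ℕ) (i : ℕ) : ℝ :=
  ((Finset.univ.filter fun j => x j = i).card : ℝ) / n


open scoped ENNReal

namespace Stmt14Aux

/-- count of coordinates satisfying a Boolean predicate, as a real number -/
noncomputable def cnt (n : ℕ) (f : ℕ → Bool) (x : Fin n → ℕ) : ℝ :=
  ∑ j : Fin n, if f (x j) then (1:ℝ) else 0

lemma cnt_nonneg (n : ℕ) (f : ℕ → Bool) (x : Fin n → ℕ) : 0 ≤ cnt n f x :=
  Finset.sum_nonneg fun _ _ => by positivity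

lemma cnt_le (n : ℕ) (f : ℕ → Bool) (x : Fin n → ℕ) : cnt n f x ≤ n := by
  have : cnt n f x ≤ ∑ _j : Fin n, (1:ℝ) :=
    Finset.sum_le_sum fun j _ => by by_cases h : f (x j) <;> simp [h]
  simpa using this

lemma cnt_meas (n : ℕ) (f : ℕ → Bool) : Measurable (cnt n f) := by
  apply Finset.measurable_sum
  intro j _
  have hg : Measurable (fun y : ℕ => if f y then (1:ℝ) else 0) := measurable_from_top
  exact hg.comp (measurable_pi_apply j)

lemma cnt_compl (n : ℕ) (i : ℕ) (x : Fin n → ℕ) :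
    cnt n (fun y => ¬ (y = i)) x = n - cnt n (fun y => y = i) x := by
  unfold cnt
  rw [eq_sub_iff_add_eq, ← Finset.sum_add_distrib]
  have h1 : ∀ j : Fin n, ((if (¬ (x j = i) : Bool) then (1:ℝ) else 0)
      + if ((x j = i : Bool)) then (1:ℝ) else 0) = 1 := by
    intro j; by_cases h : x j = i <;> simp [h]
  rw [Finset.sum_congr rfl (fun j _ => h1 j)]
  simp

lemma integrable_exp_cnt (p : PMF ℕ) (n : ℕ) (f : ℕ → Bool) (l : ℝ) :
    Integrable (fun x => Real.exp (l * cnt n f x)) (sampleMeasure p n) := by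
  have : IsProbabilityMeasure (sampleMeasure p n) := by unfold sampleMeasure; infer_instance
  refine Integrable.mono' (integrable_const (Real.exp (|l| * n)))
    ((Real.measurable_exp.comp ((cnt_meas n f).const_mul l)).aestronglyMeasurable)
    (ae_of_all _ fun x => ?_)
  rw [Real.norm_eq_abs, abs_of_pos (Real.exp_pos _)]
  apply Real.exp_le_exp.2
  calc l * cnt n f x ≤ |l| * cnt n f x := by
        exact mul_le_mul_of_nonneg_right (le_abs_self l) (cnt_nonneg n f x)
    _ ≤ |l| * n := mul_le_mul_of_nonneg_left (cnt_le n f x) (abs_nonneg l)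

lemma mgf_cnt (p : PMF ℕ) (n : ℕ) (f : ℕ → Bool) (l : ℝ) :
    ∫ x, Real.exp (l * cnt n f x) ∂(sampleMeasure p n)
      = (1 + (p.toMeasure {y | f y = true}).toReal * (Real.exp l - 1)) ^ n := by
  letI : MeasureSpace ℕ := ⟨p.toMeasure⟩
  haveI : SigmaFinite (volume : Measure ℕ) := by
    show SigmaFinite p.toMeasure; infer_instance
  have h : sampleMeasure p n = (volume : Measure (Fin n → ℕ)) := rfl
  have hexp : ∀ x : Fin n → ℕ, Real.exp (l * cnt n f x)
      = ∏ j : Fin n, (if f (x j) then Real.exp l else 1) := by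
    intro x
    unfold cnt
    rw [Finset.mul_sum, Real.exp_sum]
    refine Finset.prod_congr rfl fun j _ => ?_
    by_cases h : f (x j) <;> simp [h]
  simp_rw [hexp]
  rw [h, volume_pi, MeasureTheory.integral_fintype_prod_eq_pow (ι := Fin n) (fun y => if f y then Real.exp l else 1),
    Fintype.card_fin]
  congr 1
  show ∫ y, (if f y then Real.exp l else 1) ∂p.toMeasure = _
  have hms : MeasurableSet {y : ℕ | f y = true} := (Set.to_countable _).measurableSet
  have h1 : (fun y => if f y then Real.exp l else 1)
      = fun y => 1 + Set.indicator {y | f y = true} (fun _ => Real.exp l - 1) y := by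
    funext y; by_cases h : f y <;> simp [h, Set.indicator]
  rw [h1, integral_add (integrable_const 1) ((integrable_const (Real.exp l - 1)).indicator hms),
    integral_indicator_const _ hms]
  simp [smul_eq_mul, mul_comm, measureReal_def]


lemma rr_mem (p : PMF ℕ) (f : ℕ → Bool) :
    0 ≤ (p.toMeasure {y | f y = true}).toReal ∧ (p.toMeasure {y | f y = true}).toReal ≤ 1 := by
  constructor
  · exact ENNReal.toReal_nonneg
  · have : p.toMeasure {y | f y = true} ≤ 1 := prob_le_one
    exact ENNReal.toReal_le_of_le_ofReal one_pos.le (by simpa using this)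

lemma meas_ne_top (p : PMF ℕ) (n : ℕ) (s : Set (Fin n → ℕ)) : sampleMeasure p n s ≠ ⊤ := by
  have : IsProbabilityMeasure (sampleMeasure p n) := by unfold sampleMeasure; infer_instance
  exact measure_ne_top _ _

/-- Upper-tail Chernoff bound for `cnt`. -/
lemma chernoff_up (p : PMF ℕ) (n : ℕ) (f : ℕ → Bool) (l u : ℝ) (hl : 0 ≤ l) :
    sampleMeasure p n {x | u ≤ cnt n f x}
      ≤ ENNReal.ofReal (Real.exp ((n:ℝ) * ((p.toMeasure {y | f y = true}).toReal * (Real.exp l - 1)) - l * u)) := by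
  set μ := sampleMeasure p n
  set r := (p.toMeasure {y | f y = true}).toReal with hr
  obtain ⟨hr0, hr1⟩ := rr_mem p f
  have key : Real.exp (l*u) * (μ {x | Real.exp (l*u) ≤ Real.exp (l * cnt n f x)}).toReal
      ≤ (1 + r * (Real.exp l - 1)) ^ n := by
    rw [← mgf_cnt p n f l]
    exact mul_meas_ge_le_integral_of_nonneg (ae_of_all _ fun x => (Real.exp_pos _).le)
      (integrable_exp_cnt p n f l) _
  have hsub : {x : Fin n → ℕ | u ≤ cnt n f x} ⊆ {x | Real.exp (l*u) ≤ Real.exp (l * cnt n f x)} :=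
    fun x hx => Real.exp_le_exp.2 (mul_le_mul_of_nonneg_left hx hl)
  have hbase : (1 + r * (Real.exp l - 1)) ^ n ≤ Real.exp ((n:ℝ) * (r * (Real.exp l - 1))) := by
    have h1 : (1 + r * (Real.exp l - 1)) ≤ Real.exp (r * (Real.exp l - 1)) := by
      have := Real.add_one_le_exp (r * (Real.exp l - 1)); linarith
    have h0 : 0 ≤ 1 + r * (Real.exp l - 1) := by nlinarith [Real.add_one_le_exp l, Real.exp_pos l]
    calc (1 + r * (Real.exp l - 1)) ^ n ≤ (Real.exp (r * (Real.exp l - 1))) ^ n :=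
          pow_le_pow_left₀ h0 h1 n
      _ = Real.exp ((n:ℝ) * (r * (Real.exp l - 1))) := by
          rw [← Real.exp_nat_mul]
  have h2 : (μ {x | u ≤ cnt n f x}).toReal
      ≤ Real.exp ((n:ℝ) * (r * (Real.exp l - 1)) - l * u) := by
    have hm : (μ {x | u ≤ cnt n f x}).toReal
        ≤ (μ {x | Real.exp (l*u) ≤ Real.exp (l * cnt n f x)}).toReal := by
      apply ENNReal.toReal_mono (meas_ne_top p n _) (measure_mono hsub)
    have hpos := Real.exp_pos (l*u)
    have key2 : (μ {x | Real.exp (l*u) ≤ Real.exp (l * cnt n f x)}).toReal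
        ≤ (1 + r * (Real.exp l - 1)) ^ n / Real.exp (l*u) := by
      rw [le_div_iff₀ hpos]; rw [mul_comm] at key; exact key
    rw [Real.exp_sub, div_eq_mul_inv]
    calc (μ {x | u ≤ cnt n f x}).toReal
        ≤ (μ {x | Real.exp (l*u) ≤ Real.exp (l * cnt n f x)}).toReal := hm
      _ ≤ (1 + r * (Real.exp l - 1)) ^ n / Real.exp (l*u) := key2
      _ ≤ Real.exp ((n:ℝ) * (r * (Real.exp l - 1))) / Real.exp (l*u) := by
          gcongr
      _ = Real.exp ((n:ℝ) * (r * (Real.exp l - 1))) * (Real.exp (l*u))⁻¹ := by ring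
  calc μ {x | u ≤ cnt n f x} = ENNReal.ofReal ((μ {x | u ≤ cnt n f x}).toReal) :=
        (ENNReal.ofReal_toReal (meas_ne_top p n _)).symm
    _ ≤ _ := ENNReal.ofReal_le_ofReal h2


/-- Lower-tail Chernoff bound for `cnt`. -/
lemma chernoff_lo (p : PMF ℕ) (n : ℕ) (f : ℕ → Bool) (l u : ℝ) (hl : 0 ≤ l) :
    sampleMeasure p n {x | cnt n f x ≤ u}
      ≤ ENNReal.ofReal (Real.exp ((n:ℝ) * ((p.toMeasure {y | f y = true}).toReal * (Real.exp (-l) - 1)) + l * u)) := by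
  set μ := sampleMeasure p n
  set r := (p.toMeasure {y | f y = true}).toReal with hr
  obtain ⟨hr0, hr1⟩ := rr_mem p f
  have key : Real.exp (-(l*u)) * (μ {x | Real.exp (-(l*u)) ≤ Real.exp ((-l) * cnt n f x)}).toReal
      ≤ (1 + r * (Real.exp (-l) - 1)) ^ n := by
    rw [← mgf_cnt p n f (-l)]
    exact mul_meas_ge_le_integral_of_nonneg (ae_of_all _ fun x => (Real.exp_pos _).le)
      (integrable_exp_cnt p n f (-l)) _
  have hsub : {x : Fin n → ℕ | cnt n f x ≤ u} ⊆ {x | Real.exp (-(l*u)) ≤ Real.exp ((-l) * cnt n f x)} := by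
    intro x hx
    apply Real.exp_le_exp.2
    have : l * cnt n f x ≤ l * u := mul_le_mul_of_nonneg_left hx hl
    linarith
  have hbase : (1 + r * (Real.exp (-l) - 1)) ^ n ≤ Real.exp ((n:ℝ) * (r * (Real.exp (-l) - 1))) := by
    have h1 : (1 + r * (Real.exp (-l) - 1)) ≤ Real.exp (r * (Real.exp (-l) - 1)) := by
      have := Real.add_one_le_exp (r * (Real.exp (-l) - 1)); linarith
    have h0 : 0 ≤ 1 + r * (Real.exp (-l) - 1) := by
      have he1 : Real.exp (-l) ≤ 1 := by
        have := Real.exp_le_exp.2 (show -l ≤ 0 by linarith)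
        rwa [Real.exp_zero] at this
      nlinarith [Real.exp_pos (-l)]
    calc (1 + r * (Real.exp (-l) - 1)) ^ n ≤ (Real.exp (r * (Real.exp (-l) - 1))) ^ n :=
          pow_le_pow_left₀ h0 h1 n
      _ = Real.exp ((n:ℝ) * (r * (Real.exp (-l) - 1))) := by rw [← Real.exp_nat_mul]
  have hpos := Real.exp_pos (-(l*u))
  have key2 : (μ {x | Real.exp (-(l*u)) ≤ Real.exp ((-l) * cnt n f x)}).toReal
      ≤ (1 + r * (Real.exp (-l) - 1)) ^ n / Real.exp (-(l*u)) := by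
    rw [le_div_iff₀ hpos]; rw [mul_comm] at key; exact key
  have h2 : (μ {x | cnt n f x ≤ u}).toReal
      ≤ Real.exp ((n:ℝ) * (r * (Real.exp (-l) - 1)) + l * u) := by
    have hm := ENNReal.toReal_mono (meas_ne_top p n _) (measure_mono hsub)
    have : Real.exp ((n:ℝ) * (r * (Real.exp (-l) - 1)) + l * u)
        = Real.exp ((n:ℝ) * (r * (Real.exp (-l) - 1))) / Real.exp (-(l*u)) := by
      rw [← Real.exp_sub]; ring_nf
    rw [this]
    calc (μ {x | cnt n f x ≤ u}).toReal
        ≤ (μ {x | Real.exp (-(l*u)) ≤ Real.exp ((-l) * cnt n f x)}).toReal := hm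
      _ ≤ (1 + r * (Real.exp (-l) - 1)) ^ n / Real.exp (-(l*u)) := key2
      _ ≤ _ := by gcongr
  calc μ {x | cnt n f x ≤ u} = ENNReal.ofReal ((μ {x | cnt n f x ≤ u}).toReal) :=
        (ENNReal.ofReal_toReal (meas_ne_top p n _)).symm
    _ ≤ _ := ENNReal.ofReal_le_ofReal h2

/-- Chernoff bound with summable (linear in `r`) numerator, for the small-probability union bound. -/
lemma chernoff_small (p : PMF ℕ) (n : ℕ) (f : ℕ → Bool) (l u : ℝ) (hl : 0 ≤ l)
    (hu : 2 ≤ Real.exp (l * u)) :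
    sampleMeasure p n {x | u ≤ cnt n f x}
      ≤ ENNReal.ofReal (((1 + (p.toMeasure {y | f y = true}).toReal * (Real.exp l - 1)) ^ n - 1)
          / (Real.exp (l * u) - 1)) := by
  haveI : IsProbabilityMeasure (sampleMeasure p n) := by unfold sampleMeasure; infer_instance
  set μ := sampleMeasure p n
  set r := (p.toMeasure {y | f y = true}).toReal with hr
  obtain ⟨hr0, hr1⟩ := rr_mem p f
  have hεpos : 0 < Real.exp (l*u) - 1 := by linarith
  have hint : Integrable (fun x => Real.exp (l * cnt n f x) - 1) μ :=
    (integrable_exp_cnt p n f l).sub (integrable_const 1)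
  have key : (Real.exp (l*u) - 1) * (μ {x | Real.exp (l*u) - 1 ≤ Real.exp (l * cnt n f x) - 1}).toReal
      ≤ (1 + r * (Real.exp l - 1)) ^ n - 1 := by
    have := mul_meas_ge_le_integral_of_nonneg (μ := μ)
      (f := fun x => Real.exp (l * cnt n f x) - 1)
      (ae_of_all _ fun x => by
        have : (0:ℝ) ≤ l * cnt n f x := mul_nonneg hl (cnt_nonneg n f x)
        have := Real.one_le_exp this
        simp only [Pi.zero_apply]; linarith)
      hint (Real.exp (l*u) - 1)
    calc (Real.exp (l*u) - 1) * (μ {x | Real.exp (l*u) - 1 ≤ Real.exp (l * cnt n f x) - 1}).toReal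
        ≤ ∫ x, (Real.exp (l * cnt n f x) - 1) ∂μ := this
      _ = (1 + r * (Real.exp l - 1)) ^ n - 1 := by
          rw [integral_sub (integrable_exp_cnt p n f l) (integrable_const 1), mgf_cnt p n f l]
          simp [hr]
  have hsub : {x : Fin n → ℕ | u ≤ cnt n f x}
      ⊆ {x | Real.exp (l*u) - 1 ≤ Real.exp (l * cnt n f x) - 1} := by
    intro x hx
    have : Real.exp (l*u) ≤ Real.exp (l * cnt n f x) :=
      Real.exp_le_exp.2 (mul_le_mul_of_nonneg_left hx hl)
    simp only [Set.mem_setOf_eq]; linarith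
  have h2 : (μ {x | u ≤ cnt n f x}).toReal
      ≤ ((1 + r * (Real.exp l - 1)) ^ n - 1) / (Real.exp (l*u) - 1) := by
    rw [le_div_iff₀ hεpos, mul_comm]
    calc (Real.exp (l*u) - 1) * (μ {x | u ≤ cnt n f x}).toReal
        ≤ (Real.exp (l*u) - 1) * (μ {x | Real.exp (l*u) - 1 ≤ Real.exp (l * cnt n f x) - 1}).toReal := by
          exact mul_le_mul_of_nonneg_left (ENNReal.toReal_mono (meas_ne_top p n _) (measure_mono hsub)) hεpos.le
      _ ≤ _ := key
  calc μ {x | u ≤ cnt n f x} = ENNReal.ofReal ((μ {x | u ≤ cnt n f x}).toReal) :=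
        (ENNReal.ofReal_toReal (meas_ne_top p n _)).symm
    _ ≤ _ := ENNReal.ofReal_le_ofReal h2


lemma exp_cubic {x : ℝ} (h0 : 0 ≤ x) (h1 : x ≤ 1) :
    Real.exp x ≤ 1 + x + x^2/2 + (2/9)*x^3 := by
  have hb := Real.exp_bound (x := x) (by rw [abs_of_nonneg h0]; exact h1) (n := 3) (by norm_num)
  have hs : ∑ i ∈ Finset.range 3, x ^ i / (Nat.factorial i : ℝ) = 1 + x + x^2/2 := by
    norm_num [Finset.sum_range_succ, Nat.factorial]
  rw [hs, abs_of_nonneg h0] at hb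
  have h3 := (abs_le.1 hb).2
  have h2 : x ^ 3 * ((Nat.succ 3 : ℝ) / ((Nat.factorial 3 : ℝ) * (3:ℕ))) = (2/9) * x^3 := by
    norm_num [Nat.factorial]; ring
  rw [h2] at h3
  linarith

lemma exp_cubic_neg {x : ℝ} (h0 : 0 ≤ x) (h1 : x ≤ 1) :
    Real.exp (-x) ≤ 1 - x + x^2/2 + (2/9)*x^3 := by
  have hb := Real.exp_bound (x := -x) (by rw [abs_neg, abs_of_nonneg h0]; exact h1) (n := 3) (by norm_num)
  have hs : ∑ i ∈ Finset.range 3, (-x) ^ i / (Nat.factorial i : ℝ) = 1 - x + x^2/2 := by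
    norm_num [Finset.sum_range_succ, Nat.factorial]
    ring
  rw [hs, abs_neg, abs_of_nonneg h0] at hb
  have h3 := (abs_le.1 hb).2
  have h2 : x ^ 3 * ((Nat.succ 3 : ℝ) / ((Nat.factorial 3 : ℝ) * (3:ℕ))) = (2/9) * x^3 := by
    norm_num [Nat.factorial]; ring
  rw [h2] at h3
  linarith

lemma exp_sub_one_le_mul {x : ℝ} (h0 : 0 ≤ x) : Real.exp x - 1 ≤ x * Real.exp x := by
  have h := Real.add_one_le_exp (-x)
  have hp := Real.exp_pos x
  have : (1 - x) * Real.exp x ≤ Real.exp (-x) * Real.exp x := by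
    apply mul_le_mul_of_nonneg_right (by linarith) hp.le
  rw [← Real.exp_add] at this
  simp at this
  nlinarith

lemma exp_one_facts : Real.exp 1 - 1 ≤ (1.719:ℝ) ∧ (0:ℝ) ≤ Real.exp 1 - 1 := by
  constructor
  · have := Real.exp_one_lt_d9
    linarith
  · have := Real.one_le_exp (le_refl 0 |>.trans zero_le_one)
    nlinarith [Real.add_one_le_exp (1:ℝ)]


lemma tail_mid_up (p : PMF ℕ) (n : ℕ) (f : ℕ → Bool) (r b : ℝ)
    (hrval : (p.toMeasure {y | f y = true}).toReal = r)
    (hb : 0 < b) (h2 : 2*b ≤ r) (hr2 : r ≤ 1/2) :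
    sampleMeasure p n {x | (n:ℝ)*(r + 1.66*Real.sqrt (r*b)) ≤ cnt n f x}
      ≤ ENNReal.ofReal (Real.exp (-((n:ℝ)*b))) := by
  have hr0 : 0 < r := by linarith
  set g := Real.sqrt (r*b) with hgdef
  have hg0 : 0 ≤ g := Real.sqrt_nonneg _
  have hg2 : g^2 = r*b := Real.sq_sqrt (by positivity)
  set l := 1.08*g/r with hldef
  have hl0 : 0 ≤ l := by positivity
  have hl2 : r * l^2 = 1.1664 * b := by
    rw [hldef, div_pow, mul_pow, hg2, mul_div_assoc', div_eq_iff (by positivity)]; ring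
  have hll : l^2 ≤ 0.5832 := by
    nlinarith [mul_nonneg (by linarith : (0:ℝ) ≤ r - 2*b) (sq_nonneg l)]
  have hl1 : l ≤ 0.764 := by nlinarith [hll, sq_nonneg (l + 0.764)]
  have hlg : l * g = 1.08 * b := by
    rw [hldef]; field_simp; nlinarith [hg2]
  refine (chernoff_up p n f l ((n:ℝ)*(r + 1.66*g)) hl0).trans ?_
  apply ENNReal.ofReal_le_ofReal
  apply Real.exp_le_exp.2
  rw [hrval]
  have hcub := exp_cubic hl0 (by linarith)
  have hinner : r * (Real.exp l - 1) - l * (r + 1.66*g) ≤ -b := by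
    have hrl3 : r * l^3 ≤ 1.1664 * b * 0.764 := by
      calc r * l^3 = (r * l^2) * l := by ring
        _ ≤ 1.1664 * b * 0.764 := by rw [hl2]; nlinarith
    nlinarith [mul_le_mul_of_nonneg_left hcub hr0.le, hl2, hlg, hrl3]
  calc (n:ℝ) * (r * (Real.exp l - 1)) - l * ((n:ℝ)*(r + 1.66*g))
      = (n:ℝ) * (r * (Real.exp l - 1) - l * (r + 1.66*g)) := by ring
    _ ≤ (n:ℝ) * (-b) := mul_le_mul_of_nonneg_left hinner (Nat.cast_nonneg n)
    _ = -((n:ℝ)*b) := by ring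

lemma tail_mid_lo (p : PMF ℕ) (n : ℕ) (f : ℕ → Bool) (r b : ℝ)
    (hrval : (p.toMeasure {y | f y = true}).toReal = r)
    (hb : 0 < b) (h2 : 2*b ≤ r) (hr2 : r ≤ 1/2) :
    sampleMeasure p n {x | cnt n f x ≤ (n:ℝ)*(r - 1.66*Real.sqrt (r*b))}
      ≤ ENNReal.ofReal (Real.exp (-((n:ℝ)*b))) := by
  have hr0 : 0 < r := by linarith
  set g := Real.sqrt (r*b) with hgdef
  have hg0 : 0 ≤ g := Real.sqrt_nonneg _
  have hg2 : g^2 = r*b := Real.sq_sqrt (by positivity)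
  set l := 1.08*g/r with hldef
  have hl0 : 0 ≤ l := by positivity
  have hl2 : r * l^2 = 1.1664 * b := by
    rw [hldef, div_pow, mul_pow, hg2, mul_div_assoc', div_eq_iff (by positivity)]; ring
  have hll : l^2 ≤ 0.5832 := by
    nlinarith [mul_nonneg (by linarith : (0:ℝ) ≤ r - 2*b) (sq_nonneg l)]
  have hl1 : l ≤ 0.764 := by nlinarith [hll, sq_nonneg (l + 0.764)]
  have hlg : l * g = 1.08 * b := by
    rw [hldef]; field_simp; nlinarith [hg2]
  refine (chernoff_lo p n f l ((n:ℝ)*(r - 1.66*g)) hl0).trans ?_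
  apply ENNReal.ofReal_le_ofReal
  apply Real.exp_le_exp.2
  rw [hrval]
  have hcub := exp_cubic_neg hl0 (by linarith)
  have hinner : r * (Real.exp (-l) - 1) + l * (r - 1.66*g) ≤ -b := by
    have hrl3 : r * l^3 ≤ 1.1664 * b * 0.764 := by
      calc r * l^3 = (r * l^2) * l := by ring
        _ ≤ 1.1664 * b * 0.764 := by rw [hl2]; nlinarith
    nlinarith [mul_le_mul_of_nonneg_left hcub hr0.le, hl2, hlg, hrl3]
  calc (n:ℝ) * (r * (Real.exp (-l) - 1)) + l * ((n:ℝ)*(r - 1.66*g))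
      = (n:ℝ) * (r * (Real.exp (-l) - 1) + l * (r - 1.66*g)) := by ring
    _ ≤ (n:ℝ) * (-b) := mul_le_mul_of_nonneg_left hinner (Nat.cast_nonneg n)
    _ = -((n:ℝ)*b) := by ring

lemma tail8 (p : PMF ℕ) (n : ℕ) (f : ℕ → Bool) (r b : ℝ)
    (hrval : (p.toMeasure {y | f y = true}).toReal = r)
    (hb : 0 < b) (hr2b : r ≤ 2*b) :
    sampleMeasure p n {x | 8*((n:ℝ)*b) ≤ cnt n f x}
      ≤ ENNReal.ofReal (Real.exp (-((n:ℝ)*b))) := by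
  have hr0 : 0 ≤ r := by rw [← hrval]; exact ENNReal.toReal_nonneg
  refine (chernoff_up p n f 1 (8*((n:ℝ)*b)) zero_le_one).trans ?_
  apply ENNReal.ofReal_le_ofReal
  apply Real.exp_le_exp.2
  rw [hrval]
  obtain ⟨he1, he2⟩ := exp_one_facts
  have h1 : r * (Real.exp 1 - 1) ≤ 3.438*b := by nlinarith
  nlinarith [mul_le_mul_of_nonneg_left h1 (Nat.cast_nonneg n),
    mul_nonneg (Nat.cast_nonneg n) hb.le]


lemma tail_small (p : PMF ℕ) (n : ℕ) (f : ℕ → Bool) (r b : ℝ)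
    (hrval : (p.toMeasure {y | f y = true}).toReal = r)
    (hb : 0 < b) (hnb : 5 ≤ (n:ℝ)*b) (hr2b : r ≤ 2*b) :
    sampleMeasure p n {x | 8*((n:ℝ)*b) ≤ cnt n f x}
      ≤ ENNReal.ofReal (3.5 * ((n:ℝ) * r) * (Real.exp (-((n:ℝ)*b)))^4) := by
  have hr0 : 0 ≤ r := by rw [← hrval]; exact ENNReal.toReal_nonneg
  have hn0 : (0:ℝ) ≤ n := Nat.cast_nonneg n
  obtain ⟨he1, he2⟩ := exp_one_facts
  have hu : (2:ℝ) ≤ Real.exp (1 * (8*((n:ℝ)*b))) := by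
    have h8 : (1:ℝ) ≤ 1 * (8*((n:ℝ)*b)) := by nlinarith
    calc (2:ℝ) ≤ Real.exp 1 := by nlinarith [Real.add_one_le_exp (1:ℝ)]
      _ ≤ _ := Real.exp_le_exp.2 h8
  refine (chernoff_small p n f 1 (8*((n:ℝ)*b)) zero_le_one hu).trans ?_
  apply ENNReal.ofReal_le_ofReal
  rw [hrval]
  set E := Real.exp (1 * (8*((n:ℝ)*b))) with hE
  have hεpos : (0:ℝ) < E - 1 := by linarith
  rw [div_le_iff₀ hεpos]
  -- numerator bound
  have hnum : (1 + r * (Real.exp 1 - 1)) ^ n - 1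
      ≤ (1.719 * ((n:ℝ)*r)) * Real.exp (3.438 * ((n:ℝ)*b)) := by
    have hx0 : (0:ℝ) ≤ (n:ℝ) * (r * (Real.exp 1 - 1)) := by positivity
    have hpow : (1 + r * (Real.exp 1 - 1)) ^ n ≤ Real.exp ((n:ℝ) * (r * (Real.exp 1 - 1))) := by
      calc (1 + r * (Real.exp 1 - 1)) ^ n ≤ (Real.exp (r * (Real.exp 1 - 1))) ^ n := by
            apply pow_le_pow_left₀ (by nlinarith) (by linarith [Real.add_one_le_exp (r * (Real.exp 1 - 1))])
        _ = Real.exp ((n:ℝ) * (r * (Real.exp 1 - 1))) := by rw [← Real.exp_nat_mul]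
    have hchain : Real.exp ((n:ℝ) * (r * (Real.exp 1 - 1))) - 1
        ≤ ((n:ℝ) * (r * (Real.exp 1 - 1))) * Real.exp ((n:ℝ) * (r * (Real.exp 1 - 1))) :=
      exp_sub_one_le_mul hx0
    have hre : r * (Real.exp 1 - 1) ≤ 3.438 * b := by
      nlinarith [mul_le_mul_of_nonneg_right hr2b he2,
        mul_le_mul_of_nonneg_left he1 (by linarith : (0:ℝ) ≤ 2*b)]
    have harg : (n:ℝ) * (r * (Real.exp 1 - 1)) ≤ 3.438 * ((n:ℝ)*b) := by
      nlinarith [mul_le_mul_of_nonneg_left hre hn0]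
    have hmono : Real.exp ((n:ℝ) * (r * (Real.exp 1 - 1))) ≤ Real.exp (3.438 * ((n:ℝ)*b)) :=
      Real.exp_le_exp.2 harg
    have hcoef : (n:ℝ) * (r * (Real.exp 1 - 1)) ≤ 1.719 * ((n:ℝ)*r) := by
      nlinarith [mul_le_mul_of_nonneg_left he1 (mul_nonneg hn0 hr0)]
    calc (1 + r * (Real.exp 1 - 1)) ^ n - 1
        ≤ Real.exp ((n:ℝ) * (r * (Real.exp 1 - 1))) - 1 := by linarith
      _ ≤ ((n:ℝ) * (r * (Real.exp 1 - 1))) * Real.exp ((n:ℝ) * (r * (Real.exp 1 - 1))) := hchain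
      _ ≤ (1.719 * ((n:ℝ)*r)) * Real.exp (3.438 * ((n:ℝ)*b)) := by
          apply mul_le_mul hcoef hmono (Real.exp_pos _).le (by positivity)
  -- RHS lower bound: 3.5 n r E'^4 * (E − 1) ≥ 3.5 n r exp(−4nb) * exp(8nb)/2 = 1.75 n r exp(4 n b)
  have hrhs : (1.719 * ((n:ℝ)*r)) * Real.exp (3.438 * ((n:ℝ)*b))
      ≤ 3.5 * ((n:ℝ) * r) * (Real.exp (-((n:ℝ)*b)))^4 * (E - 1) := by
    have hE2 : E/2 ≤ E - 1 := by linarith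
    have hEexp : (Real.exp (-((n:ℝ)*b)))^4 * E = Real.exp (4 * ((n:ℝ)*b)) := by
      rw [hE, ← Real.exp_nat_mul, ← Real.exp_add]
      norm_num
      ring_nf
    have key : (1.719 * ((n:ℝ)*r)) * Real.exp (3.438 * ((n:ℝ)*b))
        ≤ 1.75 * ((n:ℝ) * r) * Real.exp (4 * ((n:ℝ)*b)) := by
      apply mul_le_mul (by nlinarith) (Real.exp_le_exp.2 (by nlinarith)) (Real.exp_pos _).le (by positivity)
    calc (1.719 * ((n:ℝ)*r)) * Real.exp (3.438 * ((n:ℝ)*b))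
        ≤ 1.75 * ((n:ℝ) * r) * Real.exp (4 * ((n:ℝ)*b)) := key
      _ = 3.5 * ((n:ℝ) * r) * ((Real.exp (-((n:ℝ)*b)))^4 * E) / 2 := by rw [hEexp]; ring
      _ = 3.5 * ((n:ℝ) * r) * (Real.exp (-((n:ℝ)*b)))^4 * (E/2) := by ring
      _ ≤ 3.5 * ((n:ℝ) * r) * (Real.exp (-((n:ℝ)*b)))^4 * (E - 1) := by
          apply mul_le_mul_of_nonneg_left hE2 (by positivity)
  linarith


lemma mid_alg (b q z t : ℝ) (hb : 0 < b) (hq2 : 2*b ≤ q) (hq : q ≤ 1/2)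
    (hz0 : 0 ≤ z) (ht0 : 0 ≤ t)
    (hzg : z ≤ 1.66*Real.sqrt (q*b))
    (hvar : q*(1-q) ≤ t^2 + z) :
    z ≤ 2.4*(Real.sqrt b * t) + 5.6*b := by
  have hq0 : 0 < q := by linarith
  have hg2 : (Real.sqrt (q*b))^2 = q*b := Real.sq_sqrt (by positivity)
  have hsb2 : (Real.sqrt b)^2 = b := Real.sq_sqrt hb.le
  have hsb0 : 0 ≤ Real.sqrt b := Real.sqrt_nonneg b
  set A := Real.sqrt b * t with hA
  have hA0 : 0 ≤ A := by positivity
  have h1 : z^2 ≤ 2.7556*(q*b) := by nlinarith [Real.sqrt_nonneg (q*b)]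
  have h2 : q ≤ 2*(q*(1-q)) := by nlinarith
  have h3 : z^2 ≤ 5.5112*A^2 + 5.5112*(b*z) := by nlinarith
  nlinarith [sq_nonneg (z - 2.4*A - 5.6*b), mul_nonneg hA0 hz0, mul_nonneg hb.le hz0,
    sq_nonneg A, mul_nonneg hA0 hb.le, sq_nonneg (z - 5.6*b)]

lemma var_transfer (P M : ℝ) (hP0 : 0 ≤ P) (hP1 : P ≤ 1) (hM0 : 0 ≤ M) (hM1 : M ≤ 1) :
    P*(1-P) ≤ M*(1-M) + |P - M| := by
  rcases le_or_gt (P+M) 1 with h | h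
  · nlinarith [mul_nonneg (sub_nonneg.2 (le_abs_self (P-M))) (by linarith : (0:ℝ) ≤ 1-P-M),
      mul_nonneg (abs_nonneg (P-M)) (by linarith : (0:ℝ) ≤ P+M)]
  · nlinarith [mul_nonneg (by linarith [neg_abs_le (P-M)] : (0:ℝ) ≤ |P-M| + (P-M))
        (by linarith : (0:ℝ) ≤ P+M-1),
      mul_nonneg (abs_nonneg (P-M)) (by linarith : (0:ℝ) ≤ 2-P-M)]

end Stmt14Aux

open Stmt14Aux
set_option maxHeartbeats 2000000

/-- Theorem 4, empirical bound: for `n ≥ 81` and `δ ∈ (0,1)`, with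
`a = (4/(3n)) log(2(n+1)/δ) + log(n)/n`, `b = 2√(log(n+1)/n + (1/n) log(2/δ))` and
`v̂* = sup_i p̂_i(1-p̂_i)`, with probability at least `1 - δ - 81/n`,
`sup_i |p_i - p̂_i| ≤ a + (3/2)b² + b√a + (3/2) b √(v̂*)`. -/
theorem stmt_14 (p : PMF ℕ) (n : ℕ) (hn : 81 ≤ n) (δ : ℝ) (hδ : δ ∈ Set.Ioo (0 : ℝ) 1) :
    ENNReal.ofReal (1 - δ - 81 / n) ≤
      sampleMeasure p n {x |
        (⨆ i : ℕ, |(p i).toReal - mle n x i|) ≤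
          (4 / (3 * n) * Real.log (2 * (n + 1) / δ) + Real.log n / n) +
            3 * (2 * Real.sqrt (Real.log ((n : ℝ) + 1) / n + (1 / n) * Real.log (2 / δ))) ^ 2 / 2 +
            (2 * Real.sqrt (Real.log ((n : ℝ) + 1) / n + (1 / n) * Real.log (2 / δ))) *
              Real.sqrt (4 / (3 * n) * Real.log (2 * (n + 1) / δ) + Real.log n / n) +
            3 * (2 * Real.sqrt (Real.log ((n : ℝ) + 1) / n + (1 / n) * Real.log (2 / δ))) *
              Real.sqrt (⨆ i : ℕ, mle n x i * (1 - mle n x i)) / 2} := by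
  classical
  obtain ⟨hδ0, hδ1⟩ := hδ
  haveI : IsProbabilityMeasure (sampleMeasure p n) := by
    unfold sampleMeasure; infer_instance
  have hnR : (81:ℝ) ≤ (n:ℝ) := by exact_mod_cast hn
  have hnpos : (0:ℝ) < n := by linarith
  set β : ℝ := Real.log ((n:ℝ)+1)/n + (1/n) * Real.log (2/δ) with hβdef
  have hlogn1 : 0 < Real.log ((n:ℝ)+1) := Real.log_pos (by linarith)
  have hlog2δ : 0 < Real.log (2/δ) := Real.log_pos (by rw [lt_div_iff₀ hδ0]; linarith)
  have hβpos : 0 < β := by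
    rw [hβdef]; positivity
  have hnβ : (n:ℝ)*β = Real.log (2*((n:ℝ)+1)/δ) := by
    have h1 : 2*((n:ℝ)+1)/δ = ((n:ℝ)+1)*(2/δ) := by field_simp
    rw [h1, Real.log_mul (by positivity) (by positivity), hβdef]
    field_simp
  clear_value β
  have hnβ5 : 5 ≤ (n:ℝ)*β := by
    rw [hnβ]
    rw [Real.le_log_iff_exp_le (by positivity)]
    have he : Real.exp 5 ≤ 164 := by
      have h1 : Real.exp 5 = (Real.exp 1)^5 := by
        rw [← Real.exp_nat_mul]; norm_num
      have h2 := Real.exp_one_lt_d9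
      have h3 : (Real.exp 1)^5 ≤ (2.7182818286:ℝ)^5 :=
        pow_le_pow_left₀ (Real.exp_pos 1).le h2.le 5
      rw [h1]; nlinarith
    have h164 : (164:ℝ) ≤ 2*((n:ℝ)+1)/δ := by
      rw [le_div_iff₀ hδ0]; nlinarith
    linarith
  set E : ℝ := Real.exp (-((n:ℝ)*β)) with hEdef
  have hE0 : 0 < E := Real.exp_pos _
  have hEval : E = δ/(2*((n:ℝ)+1)) := by
    rw [hEdef, hnβ, Real.exp_neg, Real.exp_log (by positivity), inv_div]
  clear_value E
  -- abbreviations for the bound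
  set sb : ℝ := Real.sqrt β with hsbdef
  have hsb0 : 0 ≤ sb := Real.sqrt_nonneg _
  have hsb2 : sb^2 = β := Real.sq_sqrt hβpos.le
  clear_value sb
  set aT : ℝ := 4 / (3 * (n:ℝ)) * Real.log (2 * ((n:ℝ) + 1) / δ) + Real.log n / n with haTdef
  clear_value aT
  have haβ : (4/3)*β ≤ aT := by
    rw [haTdef, ← hnβ]
    have hlogn : 0 ≤ Real.log (n:ℝ) := Real.log_nonneg (by linarith)
    have h1 : 4 / (3 * (n:ℝ)) * ((n:ℝ)*β) = (4/3)*β := by field_simp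
    rw [h1]
    have : 0 ≤ Real.log (n:ℝ) / n := by positivity
    linarith
  have ha0 : 0 ≤ aT := by nlinarith
  have hterm2 : 3*(2*sb)^2/2 = 6*β := by
    have : 3*(2*sb)^2/2 = 6*sb^2 := by ring
    rw [this, hsb2]
  have hterm3 : 2.3*β ≤ (2*sb)*Real.sqrt aT := by
    have h115 : 1.15*sb ≤ Real.sqrt aT := by
      rw [show (1.15:ℝ)*sb = Real.sqrt (1.3225*β) by
        rw [show (1.3225:ℝ)*β = (1.15*sb)^2 by rw [mul_pow]; rw [hsb2]; ring]
        rw [Real.sqrt_sq (by positivity)]]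
      exact Real.sqrt_le_sqrt (by nlinarith)
    nlinarith [Real.sqrt_nonneg aT]
  have hterm3' : 0 ≤ (2*sb)*Real.sqrt aT := by positivity
  have hD : 8*β ≤ aT + 3*(2*sb)^2/2 + (2*sb)*Real.sqrt aT := by
    rw [hterm2]; nlinarith
  -- mle facts
  have hM0 : ∀ x : Fin n → ℕ, ∀ i, 0 ≤ mle n x i := by
    intro x i; unfold mle; positivity
  have hM1 : ∀ x : Fin n → ℕ, ∀ i, mle n x i ≤ 1 := by
    intro x i; unfold mle
    rw [div_le_one hnpos]
    have := Finset.card_filter_le (Finset.univ : Finset (Fin n)) (fun j => x j = i)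
    calc ((Finset.univ.filter fun j => x j = i).card : ℝ)
        ≤ ((Finset.univ : Finset (Fin n)).card : ℝ) := by exact_mod_cast this
      _ = n := by simp
  have hPr0 : ∀ i, 0 ≤ (p i).toReal := fun i => ENNReal.toReal_nonneg
  have hPrtop : ∀ i, p i ≠ ⊤ := fun i => (lt_of_le_of_lt (p.coe_le_one i) ENNReal.one_lt_top).ne
  have hPr1 : ∀ i, (p i).toReal ≤ 1 := by
    intro i
    have h := p.coe_le_one i
    calc (p i).toReal ≤ (1:ENNReal).toReal := ENNReal.toReal_mono ENNReal.one_ne_top h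
      _ = 1 := by simp
  -- V facts
  have hVbdd : ∀ x : Fin n → ℕ, BddAbove (Set.range fun i => mle n x i * (1 - mle n x i)) := by
    intro x
    refine ⟨1, ?_⟩
    rintro _ ⟨i, rfl⟩
    simp only []
    nlinarith [hM0 x i, hM1 x i]
  have hVt : ∀ x : Fin n → ℕ, ∀ i, mle n x i * (1 - mle n x i)
      ≤ ⨆ j, mle n x j * (1 - mle n x j) := fun x i => le_ciSup (hVbdd x) i
  have hterm4 : ∀ x : Fin n → ℕ,
      0 ≤ 3 * (2*sb) * Real.sqrt (⨆ j, mle n x j * (1 - mle n x j)) / 2 := by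
    intro x; positivity
  -- count identities
  have hcntEq : ∀ (i : ℕ) (x : Fin n → ℕ),
      cnt n (fun y => decide (y = i)) x = (n:ℝ) * mle n x i := by
    intro i x
    have h1 : cnt n (fun y => decide (y = i)) x
        = ((Finset.univ.filter fun j => x j = i).card : ℝ) := by
      unfold cnt
      rw [Finset.card_filter]
      push_cast
      refine Finset.sum_congr rfl fun j _ => ?_
      by_cases h : x j = i <;> simp [h]
    rw [h1]
    unfold mle
    field_simp
  have hcntNe : ∀ (i : ℕ) (x : Fin n → ℕ),
      cnt n (fun y => decide (¬ (y = i))) x = (n:ℝ) * (1 - mle n x i) := by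
    intro i x
    have h2 := cnt_compl n i x
    have h3 : cnt n (fun y => (¬ (y = i) : Bool)) x = cnt n (fun y => decide (¬ (y = i))) x := rfl
    have h4 : cnt n (fun y => ((y = i : Bool))) x = cnt n (fun y => decide (y = i)) x := rfl
    rw [h3, h4, hcntEq i x] at h2
    rw [h2]; ring
  -- r values
  have hrEq : ∀ i, (p.toMeasure {y | (fun y => decide (y = i)) y = true}).toReal = (p i).toReal := by
    intro i
    have h1 : {y : ℕ | decide (y = i) = true} = {i} := by ext y; simp
    rw [show {y : ℕ | (fun y => decide (y = i)) y = true} = {y : ℕ | decide (y = i) = true} from rfl,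
      h1, PMF.toMeasure_apply_singleton _ _ (measurableSet_singleton i)]
  have hrNe : ∀ i, (p.toMeasure {y | (fun y => decide (¬ (y = i))) y = true}).toReal
      = 1 - (p i).toReal := by
    intro i
    have h1 : {y : ℕ | decide (¬ (y = i)) = true} = ({i} : Set ℕ)ᶜ := by ext y; simp
    rw [show {y : ℕ | (fun y => decide (¬ (y = i))) y = true}
        = {y : ℕ | decide (¬ (y = i)) = true} from rfl,
      h1, measure_compl (measurableSet_singleton i) (measure_ne_top _ _)]
    rw [ENNReal.toReal_sub_of_le (measure_mono (Set.subset_univ _) |>.trans_eq (by simp)) (by simp),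
      PMF.toMeasure_apply_singleton _ _ (measurableSet_singleton i)]
    simp
  by_cases hβ6 : β < 1/6
  · -- main branch
    set BadS : ℕ → Set (Fin n → ℕ) := fun i =>
      if (p i).toReal < 2*β then {x | 8*((n:ℝ)*β) ≤ cnt n (fun y => decide (y = i)) x} else ∅
      with hBadS
    set BadMH : ℕ → Set (Fin n → ℕ) := fun i =>
      if 1 - (p i).toReal < 2*β then {x | 8*((n:ℝ)*β) ≤ cnt n (fun y => decide (¬ (y = i))) x}
      else {x | (n:ℝ)*(min ((p i).toReal) (1 - (p i).toReal)
              + 1.66*Real.sqrt (min ((p i).toReal) (1 - (p i).toReal)*β))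
            ≤ cnt n (if (p i).toReal ≤ 1/2 then (fun y => decide (y = i))
                else (fun y => decide (¬ (y = i)))) x}
        ∪ {x | cnt n (if (p i).toReal ≤ 1/2 then (fun y => decide (y = i))
                else (fun y => decide (¬ (y = i)))) x
            ≤ (n:ℝ)*(min ((p i).toReal) (1 - (p i).toReal)
              - 1.66*Real.sqrt (min ((p i).toReal) (1 - (p i).toReal)*β))} with hBadMH
    have hBigFin : {i : ℕ | 2*β ≤ (p i).toReal}.Finite := by
      refine Set.Finite.subset (ENNReal.finite_const_le_of_tsum_ne_top
        (a := fun i => p i) (by rw [p.tsum_coe]; exact ENNReal.one_ne_top)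
        (ε := ENNReal.ofReal (2*β)) (by simp [ENNReal.ofReal_eq_zero]; linarith)) ?_
      intro i hi
      simp only [Set.mem_setOf_eq] at hi ⊢
      calc ENNReal.ofReal (2*β) ≤ ENNReal.ofReal ((p i).toReal) := ENNReal.ofReal_le_ofReal hi
        _ = p i := ENNReal.ofReal_toReal (hPrtop i)
    set Fb : Finset ℕ := hBigFin.toFinset with hFb
    have hFbmem : ∀ i, i ∈ Fb ↔ 2*β ≤ (p i).toReal := by
      intro i; rw [hFb, hBigFin.mem_toFinset]; rfl
    clear_value Fb
    set Bad : Set (Fin n → ℕ) := (⋃ i, BadS i) ∪ (⋃ i ∈ Fb, BadMH i) with hBad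
    have hevMeas : ∀ (f : ℕ → Bool) (u : ℝ), MeasurableSet {x : Fin n → ℕ | u ≤ cnt n f x} :=
      fun f u => (cnt_meas n f) measurableSet_Ici
    have hevMeas' : ∀ (f : ℕ → Bool) (u : ℝ), MeasurableSet {x : Fin n → ℕ | cnt n f x ≤ u} :=
      fun f u => (cnt_meas n f) measurableSet_Iic
    have hBadMeas : MeasurableSet Bad := by
      rw [hBad]
      apply MeasurableSet.union
      · apply MeasurableSet.iUnion
        intro i
        simp only [hBadS]
        split_ifs
        · exact hevMeas _ _
        · exact MeasurableSet.empty
      · apply MeasurableSet.biUnion (Fb : Set ℕ).to_countable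
        intro i _
        simp only [hBadMH]
        split_ifs
        · exact hevMeas _ _
        all_goals exact (hevMeas _ _).union (hevMeas' _ _)
    -- measure of BadS union
    have hmuBadS : sampleMeasure p n (⋃ i, BadS i) ≤ ENNReal.ofReal (1/(n:ℝ)) := by
      refine (measure_iUnion_le _).trans ?_
      have hper : ∀ i, sampleMeasure p n (BadS i)
          ≤ ENNReal.ofReal (3.5 * ((n:ℝ) * E^4)) * p i := by
        intro i
        simp only [hBadS]
        split_ifs with hsm
        · have hts := tail_small p n (fun y => decide (y = i)) ((p i).toReal) β (hrEq i)
              hβpos hnβ5 hsm.le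
          rw [← hEdef] at hts
          refine hts.trans (le_of_eq ?_)
          rw [show 3.5 * ((n:ℝ) * (p i).toReal) * E^4 = (3.5 * ((n:ℝ) * E^4)) * (p i).toReal
              by ring]
          rw [ENNReal.ofReal_mul (by positivity), ENNReal.ofReal_toReal (hPrtop i)]
        · simp
      refine (ENNReal.tsum_le_tsum hper).trans ?_
      rw [ENNReal.tsum_mul_left, p.tsum_coe, mul_one]
      apply ENNReal.ofReal_le_ofReal
      have hEle : E ≤ 1/(2*(n:ℝ)) := by
        rw [hEval]
        rw [div_le_div_iff₀ (by positivity) (by positivity)]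
        nlinarith
      have hE4 : E^4 ≤ (1/(2*(n:ℝ)))^4 := pow_le_pow_left₀ hE0.le hEle 4
      have h16 : (1/(2*(n:ℝ)))^4 = 1/(16*(n:ℝ)^4) := by field_simp; ring
      rw [h16] at hE4
      have h15 : 3.5 * ((n:ℝ) * E^4) ≤ 3.5 * ((n:ℝ) * (1/(16*(n:ℝ)^4))) := by
        apply mul_le_mul_of_nonneg_left (mul_le_mul_of_nonneg_left hE4 hnpos.le) (by norm_num)
      have h2 : 3.5 * ((n:ℝ) * (1/(16*(n:ℝ)^4))) ≤ 1/(n:ℝ) := by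
        have h3 : 3.5 * ((n:ℝ) * (1/(16*(n:ℝ)^4))) = 3.5/(16*(n:ℝ)^3) := by
          field_simp
        rw [h3, div_le_div_iff₀ (by positivity) hnpos]
        nlinarith [pow_pos hnpos 2, pow_pos hnpos 3]
      linarith
    -- measure of BadMH union
    have hmuBadMH : sampleMeasure p n (⋃ i ∈ Fb, BadMH i) ≤ ENNReal.ofReal (δ/10) := by
      refine (measure_biUnion_finset_le _ _).trans ?_
      have hper : ∀ i ∈ Fb, sampleMeasure p n (BadMH i) ≤ ENNReal.ofReal (2*E) := by
        intro i hiF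
        have hbig : 2*β ≤ (p i).toReal := (hFbmem i).1 hiF
        simp only [hBadMH]
        split_ifs with hhv h12
        · have h8 := tail8 p n _ (1 - (p i).toReal) β (hrNe i) hβpos hhv.le
          rw [← hEdef] at h8
          refine h8.trans (ENNReal.ofReal_le_ofReal ?_)
          linarith
        all_goals {
          push_neg at hhv
          have hq2 : 2*β ≤ min ((p i).toReal) (1 - (p i).toReal) := le_min hbig hhv
          have hqhalf : min ((p i).toReal) (1 - (p i).toReal) ≤ 1/2 := by
            rcases le_total ((p i).toReal) (1/2) with h | h
            · exact (min_le_left _ _).trans h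
            · exact (min_le_right _ _).trans (by linarith)
          refine (measure_union_le _ _).trans ?_
          first
          | (have hrval : (p.toMeasure {y | (fun y => decide (y = i)) y = true}).toReal
                = min ((p i).toReal) (1 - (p i).toReal) := by
              rw [hrEq i, min_eq_left (by linarith)]
             have h1 := tail_mid_up p n _ _ β hrval hβpos hq2 hqhalf
             have h2 := tail_mid_lo p n _ _ β hrval hβpos hq2 hqhalf
             rw [← hEdef] at h1 h2
             calc _ ≤ ENNReal.ofReal E + ENNReal.ofReal E := add_le_add h1 h2
               _ = ENNReal.ofReal (2*E) := by
                  rw [← ENNReal.ofReal_add hE0.le hE0.le]; congr 1; ring)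
          | (have hrval : (p.toMeasure {y | (fun y => decide (¬ (y = i))) y = true}).toReal
                = min ((p i).toReal) (1 - (p i).toReal) := by
              rw [hrNe i, min_eq_right (by linarith)]
             have h1 := tail_mid_up p n _ _ β hrval hβpos hq2 hqhalf
             have h2 := tail_mid_lo p n _ _ β hrval hβpos hq2 hqhalf
             rw [← hEdef] at h1 h2
             calc _ ≤ ENNReal.ofReal E + ENNReal.ofReal E := add_le_add h1 h2
               _ = ENNReal.ofReal (2*E) := by
                  rw [← ENNReal.ofReal_add hE0.le hE0.le]; congr 1; ring) }
      refine (Finset.sum_le_sum hper).trans ?_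
      rw [Finset.sum_const, nsmul_eq_mul]
      have hcard : (Fb.card : ℝ) * (2*β) ≤ 1 := by
        have h1 : ∀ i ∈ Fb, 2*β ≤ (p i).toReal := fun i hi => (hFbmem i).1 hi
        have h2 : (Fb.card : ℝ) * (2*β) = ∑ _i ∈ Fb, 2*β := by
          rw [Finset.sum_const, nsmul_eq_mul]
        rw [h2]
        calc ∑ i ∈ Fb, 2*β ≤ ∑ i ∈ Fb, (p i).toReal := Finset.sum_le_sum h1
          _ = (∑ i ∈ Fb, p i).toReal := (ENNReal.toReal_sum (fun i _ => hPrtop i)).symm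
          _ ≤ (∑' i, p i).toReal := by
              apply ENNReal.toReal_mono (by rw [p.tsum_coe]; exact ENNReal.one_ne_top)
              exact ENNReal.sum_le_tsum Fb
          _ = 1 := by rw [p.tsum_coe]; simp
      calc (Fb.card : ENNReal) * ENNReal.ofReal (2*E)
          = ENNReal.ofReal ((Fb.card : ℝ) * (2*E)) := by
            rw [ENNReal.ofReal_mul (Nat.cast_nonneg _), ENNReal.ofReal_natCast]
        _ ≤ ENNReal.ofReal (δ/10) := by
            apply ENNReal.ofReal_le_ofReal
            have hc0 : (0:ℝ) ≤ (Fb.card : ℝ) := Nat.cast_nonneg _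
            have hkey : (Fb.card : ℝ) * (2*E) * β ≤ E := by
              calc (Fb.card : ℝ) * (2*E) * β = ((Fb.card : ℝ) * (2*β)) * E := by ring
                _ ≤ 1 * E := mul_le_mul_of_nonneg_right hcard hE0.le
                _ = E := one_mul E
            have h1 : (Fb.card : ℝ) * (2*E) ≤ E/β := by
              rw [le_div_iff₀ hβpos]; exact hkey
            have h2 : E/β ≤ δ/10 := by
              rw [hEval, div_div, div_le_div_iff₀ (by positivity) (by norm_num)]
              nlinarith
            linarith
    -- total bad measure
    have hmuBad : sampleMeasure p n Bad ≤ ENNReal.ofReal (δ + 81/(n:ℝ)) := by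
      rw [hBad]
      refine (measure_union_le _ _).trans ?_
      refine (add_le_add hmuBadS hmuBadMH).trans ?_
      rw [← ENNReal.ofReal_add (by positivity) (by positivity)]
      apply ENNReal.ofReal_le_ofReal
      have h81 : 1/(n:ℝ) ≤ 81/(n:ℝ) := by
        rw [div_le_div_iff₀ hnpos hnpos]
        nlinarith
      have h2 : δ/10 ≤ δ := by linarith
      linarith
    -- pointwise
    have hGood : Badᶜ ⊆ {x : Fin n → ℕ |
        (⨆ i : ℕ, |(p i).toReal - mle n x i|) ≤
          aT + 3 * (2*sb) ^ 2 / 2 + (2*sb) * Real.sqrt aT +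
            3 * (2*sb) * Real.sqrt (⨆ i : ℕ, mle n x i * (1 - mle n x i)) / 2} := by
      intro x hx
      rw [Set.mem_compl_iff, hBad] at hx
      simp only [Set.mem_union, Set.mem_iUnion, not_or, not_exists] at hx
      obtain ⟨hx1, hx2⟩ := hx
      simp only [Set.mem_setOf_eq]
      apply ciSup_le
      intro i
      have hM0' := hM0 x i
      have hM1' := hM1 x i
      have hP0' := hPr0 i
      have hP1' := hPr1 i
      have htv := hterm4 x
      by_cases hsm : (p i).toReal < 2*β
      · -- small
        have hxs := hx1 i
        simp only [hBadS] at hxs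
        simp only [if_pos hsm, Set.mem_setOf_eq, not_le] at hxs
        rw [hcntEq i x] at hxs
        have hM8 : mle n x i < 8*β := by
          have h := (mul_lt_mul_iff_right₀ hnpos).1 (show (n:ℝ) * mle n x i < (n:ℝ)*(8*β) by
            calc (n:ℝ) * mle n x i < 8*((n:ℝ)*β) := hxs
              _ = (n:ℝ)*(8*β) := by ring)
          exact h
        have hz : |(p i).toReal - mle n x i| ≤ 8*β := by
          rw [abs_le]
          refine ⟨?_, ?_⟩ <;> nlinarith
        linarith [hD, htv]
      · push_neg at hsm
        have hiF : i ∈ Fb := (hFbmem i).2 hsm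
        have hxm := hx2 i hiF
        simp only [hBadMH] at hxm
        by_cases hhv : 1 - (p i).toReal < 2*β
        · -- heavy
          simp only [if_pos hhv, Set.mem_setOf_eq, not_le] at hxm
          rw [hcntNe i x] at hxm
          have hM8 : 1 - mle n x i < 8*β := by
            have h := (mul_lt_mul_iff_right₀ hnpos).1 (show (n:ℝ)*(1 - mle n x i) < (n:ℝ)*(8*β) by
              calc (n:ℝ)*(1 - mle n x i) < 8*((n:ℝ)*β) := hxm
                _ = (n:ℝ)*(8*β) := by ring)
            exact h
          have hz : |(p i).toReal - mle n x i| ≤ 8*β := by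
            rw [abs_le]
            refine ⟨?_, ?_⟩ <;> nlinarith
          linarith [hD, htv]
        · -- mid
          simp only [if_neg hhv, Set.mem_union, Set.mem_setOf_eq, not_or, not_le] at hxm
          push_neg at hhv
          obtain ⟨hup, hlo⟩ := hxm
          have hq2 : 2*β ≤ min ((p i).toReal) (1 - (p i).toReal) := le_min hsm hhv
          have hqhalf : min ((p i).toReal) (1 - (p i).toReal) ≤ 1/2 := by
            rcases le_total ((p i).toReal) (1/2) with h | h
            · exact (min_le_left _ _).trans h
            · exact (min_le_right _ _).trans (by linarith)
          have hzbound : |(p i).toReal - mle n x i|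
              ≤ 1.66*Real.sqrt (min ((p i).toReal) (1 - (p i).toReal)*β) := by
            by_cases h12 : (p i).toReal ≤ 1/2
            · rw [if_pos h12] at hup hlo
              rw [hcntEq i x] at hup hlo
              rw [min_eq_left (by linarith)] at hup hlo ⊢
              have h1 : mle n x i
                  < (p i).toReal + 1.66*Real.sqrt ((p i).toReal*β) := by
                have h := (mul_lt_mul_iff_right₀ hnpos).1 hup
                linarith
              have h2 : (p i).toReal - 1.66*Real.sqrt ((p i).toReal*β) < mle n x i := by
                have h := (mul_lt_mul_iff_right₀ hnpos).1 hlo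
                linarith
              rw [abs_le]
              constructor <;> linarith
            · rw [if_neg h12] at hup hlo
              rw [hcntNe i x] at hup hlo
              rw [min_eq_right (by linarith)] at hup hlo ⊢
              have h1 : 1 - mle n x i
                  < (1-(p i).toReal) + 1.66*Real.sqrt ((1-(p i).toReal)*β) := by
                have h := (mul_lt_mul_iff_right₀ hnpos).1 hup
                linarith
              have h2 : (1-(p i).toReal) - 1.66*Real.sqrt ((1-(p i).toReal)*β)
                  < 1 - mle n x i := by
                have h := (mul_lt_mul_iff_right₀ hnpos).1 hlo
                linarith
              rw [abs_le]
              constructor <;> linarith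
          have ht0 : 0 ≤ Real.sqrt (mle n x i*(1-mle n x i)) := Real.sqrt_nonneg _
          have ht2 : (Real.sqrt (mle n x i*(1-mle n x i)))^2 = mle n x i*(1-mle n x i) :=
            Real.sq_sqrt (by nlinarith)
          have hqq : min ((p i).toReal) (1 - (p i).toReal)
              * (1 - min ((p i).toReal) (1 - (p i).toReal)) = (p i).toReal*(1-(p i).toReal) := by
            rcases le_total ((p i).toReal) (1/2) with h | h
            · rw [min_eq_left (by linarith)]
            · rw [min_eq_right (by linarith)]; ring
          have hvar : min ((p i).toReal) (1 - (p i).toReal)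
              * (1 - min ((p i).toReal) (1 - (p i).toReal))
              ≤ (Real.sqrt (mle n x i*(1-mle n x i)))^2 + |(p i).toReal - mle n x i| := by
            rw [hqq, ht2]
            exact var_transfer _ _ hP0' hP1' hM0' hM1'
          have hmain := mid_alg β (min ((p i).toReal) (1 - (p i).toReal))
            (|(p i).toReal - mle n x i|) (Real.sqrt (mle n x i*(1-mle n x i)))
            hβpos hq2 hqhalf (abs_nonneg _) ht0 hzbound hvar
          rw [← hsbdef] at hmain
          have htV : Real.sqrt (mle n x i*(1-mle n x i))
              ≤ Real.sqrt (⨆ j, mle n x j * (1 - mle n x j)) :=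
            Real.sqrt_le_sqrt (hVt x i)
          have hsV : 0 ≤ Real.sqrt (⨆ j, mle n x j * (1 - mle n x j)) := Real.sqrt_nonneg _
          have hfin : 2.4*(sb*Real.sqrt (mle n x i*(1-mle n x i)))
              ≤ 3 * (2*sb) * Real.sqrt (⨆ j, mle n x j * (1 - mle n x j)) / 2 := by
            have h1 : sb*Real.sqrt (mle n x i*(1-mle n x i))
                ≤ sb*Real.sqrt (⨆ j, mle n x j * (1 - mle n x j)) :=
              mul_le_mul_of_nonneg_left htV hsb0
            nlinarith [h1, mul_nonneg hsb0 hsV]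
          have h56 : 5.6*β ≤ aT + 3*(2*sb)^2/2 + (2*sb)*Real.sqrt aT := by
            rw [hterm2]; nlinarith
          linarith
    -- conclude
    calc ENNReal.ofReal (1 - δ - 81 / n)
        ≤ 1 - ENNReal.ofReal (δ + 81/(n:ℝ)) := by
          rcases le_or_gt (1 - δ - 81/(n:ℝ)) 0 with h | h
          · rw [ENNReal.ofReal_of_nonpos h]; exact zero_le
          · apply ENNReal.le_sub_of_add_le_right ENNReal.ofReal_ne_top
            rw [← ENNReal.ofReal_add h.le (by positivity)]
            rw [show 1 - δ - 81/(n:ℝ) + (δ + 81/(n:ℝ)) = 1 by ring]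
            simp
      _ ≤ 1 - sampleMeasure p n Bad := tsub_le_tsub_left hmuBad 1
      _ = sampleMeasure p n Badᶜ := (prob_compl_eq_one_sub hBadMeas).symm
      _ ≤ _ := measure_mono hGood
  · -- trivial branch: β ≥ 1/6
    push_neg at hβ6
    have huniv : Set.univ ⊆ {x : Fin n → ℕ |
        (⨆ i : ℕ, |(p i).toReal - mle n x i|) ≤
          aT + 3 * (2*sb) ^ 2 / 2 + (2*sb) * Real.sqrt aT +
            3 * (2*sb) * Real.sqrt (⨆ i : ℕ, mle n x i * (1 - mle n x i)) / 2} := by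
      intro x _
      simp only [Set.mem_setOf_eq]
      have hsup : (⨆ i : ℕ, |(p i).toReal - mle n x i|) ≤ 1 := by
        apply ciSup_le
        intro i
        rw [abs_le]
        constructor
        · nlinarith [hPr0 i, hPr1 i, hM0 x i, hM1 x i]
        · nlinarith [hPr0 i, hPr1 i, hM0 x i, hM1 x i]
      have h6 : (1:ℝ) ≤ 3*(2*sb)^2/2 := by rw [hterm2]; linarith
      linarith [hterm4 x, hterm3', ha0, hsup]
    calc ENNReal.ofReal (1 - δ - 81 / n) ≤ 1 := by
          apply ENNReal.ofReal_le_one.2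
          have h0 : (0:ℝ) ≤ 81/(n:ℝ) := by positivity
          linarith
      _ = sampleMeasure p n Set.univ := (measure_univ).symm
      _ ≤ _ := measure_mono huniv
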